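/- Let n ≥ 3 and let H ∈ ℂ[x_1,…,x_b] be a nonzero form of degree n−1 not involving x_0, and set R = x_0·H ∈ ℂ[x_0,…,x_b]. Assume rk 𝓗_R(e_0) = 1, where e_0 = (1,0,…,0) ∈ ℂ^{b+1}. Then there exists an invertible linear change of the coordinates x_1,…,x_b (fixing x_0) after which R becomes x_0·x_1^{n-1}. -/

import Mathlib

open MvPolynomial

/-- The tensor of `k`-th order partial derivatives of `F`, evaluated at `v`:
its `(i_1, …, i_k)` entry is `(∂^k F / ∂x_{i_1} ⋯ ∂x_{i_k})(v)`. -/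
noncomputable def HF {σ : Type*} [DecidableEq σ] (k : ℕ) (F : MvPolynomial σ ℂ) (v : σ → ℂ) :
    (Fin k → σ) → ℂ := fun idx =>
  eval v ((List.ofFn idx).foldl (fun p i => pderiv i p) F)

/-- A tensor of type `m × ⋯ × m` (`k` factors) has rank one if it is nonzero and is an
outer product of `k` vectors. -/
def IsRankOne {k m : ℕ} (T : (Fin k → Fin m) → ℂ) : Prop :=
  T ≠ 0 ∧ ∃ v : Fin k → Fin m → ℂ, ∀ j, T j = ∏ i, v i (j i)

/-- The rank of a tensor: the least `r` such that `T` is a sum of `r` rank-one tensors. -/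
noncomputable def tensorRank {k m : ℕ} (T : (Fin k → Fin m) → ℂ) : ℕ :=
  sInf {r | ∃ f : Fin r → ((Fin k → Fin m) → ℂ), (∀ s, IsRankOne (f s)) ∧ T = ∑ s, f s}


/-- The pullback of `F` under the linear substitution `x ↦ M · x`. -/
noncomputable def pullback {m : ℕ} (M : Matrix (Fin m) (Fin m) ℂ)
    (F : MvPolynomial (Fin m) ℂ) : MvPolynomial (Fin m) ℂ :=
  aeval (fun i => ∑ j, C (M i j) * X j) F


section Aux
variable {σ : Type*} [Fintype σ] [DecidableEq σ]

noncomputable def Dl (l : List σ) (p : MvPolynomial σ ℂ) : MvPolynomial σ ℂ :=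
  l.foldl (fun q i => pderiv i q) p

lemma Dl_cons (i : σ) (l : List σ) (p : MvPolynomial σ ℂ) :
    Dl (i :: l) p = Dl l (pderiv i p) := rfl

lemma Dl_C_mul (l : List σ) (a : ℂ) (p : MvPolynomial σ ℂ) :
    Dl l (C a * p) = C a * Dl l p := by
  induction l generalizing p with
  | nil => rfl
  | cons i l ih => rw [Dl_cons, pderiv_C_mul, ih, Dl_cons]

lemma Dl_zero (l : List σ) : Dl l (0 : MvPolynomial σ ℂ) = 0 := by
  have := Dl_C_mul l 0 0; simpa using this

lemma coeff_pderiv (i : σ) (p : MvPolynomial σ ℂ) (m : σ →₀ ℕ) :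
    coeff m (pderiv i p) = (m i + 1 : ℕ) * coeff (m + Finsupp.single i 1) p := by
  induction p using MvPolynomial.induction_on' with
  | monomial d a =>
    rw [pderiv_monomial]
    by_cases h : d = m + Finsupp.single i 1
    · subst h
      have h1 : m + Finsupp.single i 1 - Finsupp.single i 1 = m := by
        ext j; simp [Finsupp.single_apply]
      have h2 : ((m + Finsupp.single i 1) : σ →₀ ℕ) i = m i + 1 := by simp
      rw [h1, h2, coeff_monomial, coeff_monomial]
      simp [mul_comm]
    · rw [coeff_monomial, coeff_monomial, if_neg h, mul_zero]
      by_cases hd : d i = 0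
      · split <;> simp [hd]
      · rw [if_neg]
        intro he
        apply h
        ext j
        have hj : ((d - Finsupp.single i 1 : σ →₀ ℕ)) j = m j := by rw [he]
        rw [Finsupp.tsub_apply] at hj
        have : ((m + Finsupp.single i 1 : σ →₀ ℕ)) j = m j + Finsupp.single i 1 j :=
          Finsupp.add_apply _ _ _
        rw [this]
        rcases eq_or_ne i j with rfl | hji
        · simp [Finsupp.single_apply] at hj ⊢; omega
        · simp [Finsupp.single_apply, hji] at hj ⊢; omega
  | add p q ihp ihq => simp [map_add, ihp, ihq]; ring

noncomputable def cntl (l : List σ) : σ →₀ ℕ := Multiset.toFinsupp (l : Multiset σ)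

lemma cntl_nil : cntl ([] : List σ) = 0 := by
  simp [cntl]

lemma cntl_cons (i : σ) (l : List σ) : cntl (i :: l) = cntl l + Finsupp.single i 1 := by
  ext j
  simp [cntl, Multiset.toFinsupp_apply, Finsupp.single_apply, List.count_cons,
    Finsupp.add_apply]

noncomputable def mfact (m : σ →₀ ℕ) : ℕ := ∏ i, (m i).factorial

lemma mfact_ne_zero (m : σ →₀ ℕ) : (mfact m : ℂ) ≠ 0 := by
  have : mfact m ≠ 0 := Finset.prod_ne_zero_iff.mpr fun i _ => (Nat.factorial_pos _).ne'
  exact_mod_cast this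

lemma mfact_zero : mfact (0 : σ →₀ ℕ) = 1 := by
  simp [mfact]

lemma mfact_single (i0 : σ) : mfact (Finsupp.single i0 1) = 1 := by
  unfold mfact
  apply Finset.prod_eq_one
  intro j _
  rcases eq_or_ne i0 j with rfl | hj
  · simp
  · simp [Finsupp.single_apply, hj]

lemma mfact_add_single (m : σ →₀ ℕ) (i : σ) :
    mfact (m + Finsupp.single i 1) = (m i + 1) * mfact m := by
  unfold mfact
  rw [← Finset.mul_prod_erase Finset.univ _ (Finset.mem_univ i),
      ← Finset.mul_prod_erase Finset.univ (fun j => (m j).factorial) (Finset.mem_univ i)]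
  have h1 : ((m + Finsupp.single i 1 : σ →₀ ℕ)) i = m i + 1 := by simp
  rw [h1, Nat.factorial_succ, mul_assoc]
  congr 1
  congr 1
  apply Finset.prod_congr rfl
  intro j hj
  have : j ≠ i := (Finset.mem_erase.mp hj).1
  simp [Finsupp.single_apply, Ne.symm this]

lemma lemL (l : List σ) (p : MvPolynomial σ ℂ) (m' : σ →₀ ℕ) :
    (mfact m' : ℂ) * coeff m' (Dl l p) =
      (mfact (m' + cntl l) : ℂ) * coeff (m' + cntl l) p := by
  induction l generalizing p with
  | nil => simp [cntl_nil, Dl]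
  | cons i l ih =>
    rw [Dl_cons, ih (pderiv i p), _root_.coeff_pderiv, cntl_cons, ← add_assoc]
    rw [mfact_add_single]
    push_cast
    ring

lemma degree_eq_sum (d : σ →₀ ℕ) : d.degree = ∑ i, d i :=
  Finset.sum_subset (Finset.subset_univ _) (fun i _ hi => Finsupp.notMem_support_iff.mp hi)

lemma pderiv_homog {p : MvPolynomial σ ℂ} {d : ℕ} (i : σ) (h : p.IsHomogeneous d) :
    (pderiv i p).IsHomogeneous (d - 1) := by
  intro m hm
  rw [_root_.coeff_pderiv] at hm
  have h2 : coeff (m + Finsupp.single i 1) p ≠ 0 := by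
    intro h0; rw [h0, mul_zero] at hm; exact hm rfl
  have h3 := h h2
  rw [show (1 : σ → ℕ) = fun _ => 1 from rfl] at h3 ⊢
  rw [← Finsupp.degree_eq_weight_one] at h3 ⊢
  rw [degree_eq_sum] at h3 ⊢
  have h4 : ∑ j, ((m + Finsupp.single i 1 : σ →₀ ℕ)) j = (∑ j, m j) + 1 := by
    simp only [Finsupp.add_apply, Finset.sum_add_distrib]
    congr 1
    simp [Finsupp.single_apply]
  omega

lemma Dl_homog (l : List σ) {p : MvPolynomial σ ℂ} {d : ℕ} (h : p.IsHomogeneous d) :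
    (Dl l p).IsHomogeneous (d - l.length) := by
  induction l generalizing p d with
  | nil => simpa [Dl]
  | cons i l ih =>
    rw [Dl_cons]
    have := ih (pderiv_homog i h)
    have he : d - 1 - l.length = d - (i :: l).length := by simp; omega
    rwa [he] at this

lemma eval_single_homog_one (i0 : σ) (q : MvPolynomial σ ℂ) (hq : q.IsHomogeneous 1) :
    eval (Pi.single i0 1) q = coeff (Finsupp.single i0 1) q := by
  rw [eval_eq']
  rw [Finset.sum_eq_single (Finsupp.single i0 1)]
  · have : (∏ i, (Pi.single i0 1 : σ → ℂ) i ^ ((Finsupp.single i0 1 : σ →₀ ℕ)) i) = 1 := by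
      apply Finset.prod_eq_one; intro j _
      rcases eq_or_ne j i0 with rfl | hj
      · simp
      · simp [Finsupp.single_apply, Pi.single_apply, hj, Ne.symm hj]
    rw [this, mul_one]
  · intro d hd hne
    have hdeg : d.degree = 1 := by
      rw [Finsupp.degree_eq_weight_one]; exact hq (mem_support_iff.mp hd)
    by_cases hs : ∀ j, j ≠ i0 → d j = 0
    · exfalso
      have hd0 : d = Finsupp.single i0 (d i0) := by
        ext j
        rcases eq_or_ne j i0 with rfl | hj
        · simp
        · simp [Finsupp.single_apply, Ne.symm hj, hs j hj]
      rw [degree_eq_sum, Finset.sum_eq_single i0 (fun b _ hb => hs b hb)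
        (fun h => absurd (Finset.mem_univ i0) h)] at hdeg
      exact hne (by rw [hd0, hdeg])
    · push_neg at hs
      obtain ⟨j, hj, hdj⟩ := hs
      apply mul_eq_zero_of_right
      apply Finset.prod_eq_zero (Finset.mem_univ j)
      rw [Pi.single_apply, if_neg hj]
      exact zero_pow hdj
  · intro h
    rw [notMem_support_iff.mp h, zero_mul]

lemma pderiv_ell (u : σ → ℂ) (i : σ) :
    pderiv i (∑ j, C (u j) * X j) = C (u i) := by
  rw [map_sum]
  rw [Finset.sum_eq_single i]
  · rw [pderiv_C_mul, pderiv_X_self, mul_one]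
  · intro j _ hj
    rw [pderiv_C_mul, pderiv_X_of_ne hj, mul_zero]
  · intro h; exact absurd (Finset.mem_univ i) h

lemma ell_homog (u : σ → ℂ) : (∑ j, C (u j) * X j).IsHomogeneous 1 :=
  IsHomogeneous.sum _ _ _ fun j _ => isHomogeneous_C_mul_X (u j) j

lemma Dchain (u : σ → ℂ) (l : List σ) (d : ℕ) :
    Dl l ((∑ j, C (u j) * X j) ^ d) =
      C ((d.descFactorial l.length : ℂ) * (l.map u).prod) *
        (∑ j, C (u j) * X j) ^ (d - l.length) := by
  induction l generalizing d with
  | nil => simp [Dl]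
  | cons i l ih =>
    rw [Dl_cons]
    cases d with
    | zero =>
      rw [pow_zero]
      have : pderiv i (1 : MvPolynomial σ ℂ) = 0 := pderiv_one
      rw [this, Dl_zero]
      simp
    | succ e =>
      have hp : pderiv i ((∑ j, C (u j) * X j) ^ (e + 1)) =
          C ((e + 1 : ℂ) * u i) * (∑ j, C (u j) * X j) ^ e := by
        rw [pderiv_pow, pderiv_ell, Nat.add_sub_cancel,
          show ((e + 1 : ℕ) : MvPolynomial σ ℂ) = C ((e + 1 : ℕ) : ℂ) from (C_eq_coe_nat _).symm]
        push_cast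
        rw [map_mul]
        ring
      rw [hp, Dl_C_mul, ih e]
      rw [← mul_assoc, ← C_mul]
      congr 2
      · rw [List.length_cons, Nat.succ_descFactorial_succ, List.map_cons, List.prod_cons]
        push_cast
        ring
      · rw [List.length_cons, Nat.succ_sub_succ]

lemma cntl_ofFn : ∀ {N : ℕ} (g : Fin N → σ), cntl (List.ofFn g) = ∑ k, Finsupp.single (g k) 1 := by
  intro N
  induction N with
  | zero => intro g; simp [cntl]
  | succ N ih =>
    intro g
    rw [List.ofFn_succ, cntl_cons, ih, Fin.sum_univ_succ, add_comm]

lemma prod_ofFn_map {N : ℕ} (g : Fin N → σ) (u : σ → ℂ) :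
    ((List.ofFn g).map u).prod = ∏ k, u (g k) := by
  rw [List.map_ofFn, List.prod_ofFn]
  rfl

lemma exists_idx (m : σ →₀ ℕ) {N : ℕ} (h : m.degree = N) :
    ∃ idx : Fin N → σ, cntl (List.ofFn idx) = m := by
  set l := (Finsupp.toMultiset m).toList with hl
  have hlen : l.length = N := by
    rw [Multiset.length_toList, Finsupp.card_toMultiset, ← h]
    rfl
  refine ⟨fun k => l.get (Fin.cast hlen.symm k), ?_⟩
  have heq : List.ofFn (fun k => l.get (Fin.cast hlen.symm k)) = l := by
    apply List.ext_getElem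
    · simp [hlen]
    · intro t h1 h2
      simp [List.getElem_ofFn]
  rw [heq]
  unfold cntl
  rw [hl, Multiset.coe_toList]
  exact Finsupp.toMultiset_toFinsupp m

end Aux

set_option maxHeartbeats 1000000 in
/-- Let `n ≥ 3` and let `H` be a nonzero form of degree `n - 1` in
`x_1, …, x_b` (not involving `x_0`), and set `R = x_0 · H`. If `rk 𝓗_R(e_0) = 1`, then
there is an invertible linear change of the coordinates `x_1, …, x_b` (fixing `x_0`) after
which `R` becomes `x_0 · x_1^{n-1}`. -/
theorem stmt_5 (b n : ℕ) (hn : 3 ≤ n) (hb : 1 ≤ b)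
    (H : MvPolynomial (Fin (b + 1)) ℂ) (hH : H.IsHomogeneous (n - 1))
    (hH0 : H ≠ 0) (hHx0 : pderiv 0 H = 0)
    (hrk : tensorRank (HF (n - 1) (X 0 * H) (Pi.single 0 1)) = 1) :
    ∃ M : Matrix (Fin (b + 1)) (Fin (b + 1)) ℂ, IsUnit M.det ∧
      M 0 0 = 1 ∧ (∀ j : Fin b, M 0 j.succ = 0 ∧ M j.succ 0 = 0) ∧
      pullback M (X 0 * H) = X 0 * X 1 ^ (n - 1) := by
  set T := HF (n - 1) (X 0 * H) (Pi.single 0 1) with hTdef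
  -- step 0 : basic facts
  have hone : (1 : Fin (b + 1)) ≠ 0 := by
    intro h
    have h1 : ((1 : Fin (b + 1)) : ℕ) = 1 % (b + 1) := rfl
    rw [Nat.mod_eq_of_lt (by omega)] at h1
    rw [h] at h1
    simp at h1
  have hF : (X (0 : Fin (b+1)) * H).IsHomogeneous n := by
    have := (isHomogeneous_X ℂ (0 : Fin (b+1))).mul hH
    rwa [show 1 + (n - 1) = n by omega] at this
  -- step 1 : formula for T
  have hT2 : ∀ idx : Fin (n-1) → Fin (b+1),
      T idx = (((cntl (List.ofFn idx)) 0 + 1 : ℕ) : ℂ) * (mfact (cntl (List.ofFn idx)) : ℂ)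
        * coeff (cntl (List.ofFn idx)) H := by
    intro idx
    rw [hTdef]
    set l := List.ofFn idx with hl
    have hlen : l.length = n - 1 := by rw [hl, List.length_ofFn]
    have hq : (Dl l (X 0 * H)).IsHomogeneous 1 := by
      have := Dl_homog l hF
      rwa [hlen, show n - (n - 1) = 1 by omega] at this
    have h0 : HF (n - 1) (X 0 * H) (Pi.single 0 1) idx
        = eval (Pi.single 0 1) (Dl l (X 0 * H)) := rfl
    rw [h0, eval_single_homog_one _ _ hq]
    have hL := lemL l (X 0 * H) (Finsupp.single 0 1)
    rw [mfact_single, Nat.cast_one, one_mul] at hL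
    rw [hL]
    rw [show Finsupp.single (0 : Fin (b+1)) 1 + cntl l = cntl l + Finsupp.single 0 1 from
      add_comm _ _]
    rw [mfact_add_single]
    rw [show cntl l + Finsupp.single (0 : Fin (b+1)) 1
        = Finsupp.single 0 1 + cntl l from add_comm _ _,
      coeff_X_mul]
    push_cast
    ring
  -- step 2 : coeffs of H involving x0 vanish
  have hcoeff0 : ∀ m : Fin (b+1) →₀ ℕ, m 0 ≠ 0 → coeff m H = 0 := by
    intro m hm
    have h1 := coeff_pderiv (0 : Fin (b+1)) H (m - Finsupp.single 0 1)
    rw [hHx0] at h1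
    have h2 : (m - Finsupp.single 0 1) + Finsupp.single 0 1 = m := by
      ext j
      rw [Finsupp.add_apply, Finsupp.tsub_apply]
      rcases eq_or_ne (0 : Fin (b+1)) j with rfl | hj
      · simp; omega
      · simp [Finsupp.single_apply, hj]
    rw [h2] at h1
    have h3 : ((((m - Finsupp.single 0 1) : Fin (b+1) →₀ ℕ)) 0 + 1 : ℕ) ≠ (0 : ℕ) := by omega
    have h4 := h1.symm
    simp only [coeff_zero] at h4
    rcases mul_eq_zero.mp h4 with h | h
    · exact absurd (by exact_mod_cast h) h3
    · exact h
  -- step 3 : rank one decomposition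
  obtain ⟨v, hv, hT0⟩ : ∃ v : Fin (n-1) → Fin (b+1) → ℂ,
      (∀ j, T j = ∏ i, v i (j i)) ∧ T ≠ 0 := by
    unfold tensorRank at hrk
    set S := {r | ∃ f : Fin r → ((Fin (n-1) → Fin (b+1)) → ℂ),
      (∀ s, IsRankOne (f s)) ∧ T = ∑ s, f s} with hS
    have hne : S.Nonempty := by
      by_contra h
      rw [Set.not_nonempty_iff_eq_empty] at h
      rw [h, Nat.sInf_empty] at hrk
      exact one_ne_zero hrk.symm
    have hmem := Nat.sInf_mem hne
    rw [hrk] at hmem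
    obtain ⟨f, hf1, hf2⟩ := hmem
    have hT : T = f 0 := by rw [hf2, Fin.sum_univ_one]
    obtain ⟨hne0, v, hv⟩ := hf1 0
    exact ⟨v, fun j => by rw [hT]; exact hv j, by rw [hT]; exact hne0⟩
  -- step 4 : symmetry
  have hsym : ∀ (g : Fin (n-1) → Fin (b+1)) (π : Equiv.Perm (Fin (n-1))),
      T (g ∘ π) = T g := by
    intro g π
    rw [hT2, hT2]
    have : cntl (List.ofFn (g ∘ π)) = cntl (List.ofFn g) := by
      rw [cntl_ofFn, cntl_ofFn]
      exact Equiv.sum_comp π (fun k => Finsupp.single (g k) 1)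
    rw [this]
  -- value at the all-zero index vanishes
  have hconst0 : T (fun _ => (0 : Fin (b+1))) = 0 := by
    rw [hT2]
    have h1 : (cntl (List.ofFn (fun _ : Fin (n-1) => (0 : Fin (b+1))))) 0 ≠ 0 := by
      rw [cntl_ofFn]
      rw [Finsupp.finset_sum_apply]
      simp only [Finsupp.single_eq_same]
      rw [Finset.sum_const, Finset.card_univ, Fintype.card_fin, smul_eq_mul, mul_one]
      omega
    rw [hcoeff0 _ h1, mul_zero]
  -- steps 5-8 : a single vector u
  have hNpos : 0 < n - 1 := by omega
  obtain ⟨u, hTu, hu0, k0, hk0, hk00⟩ : ∃ u : Fin (b+1) → ℂ,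
      (∀ j, T j = (((n-1).factorial : ℕ) : ℂ) * ∏ k, u (j k)) ∧ (u 0 = 0) ∧
      ∃ k0 : Fin (b+1), u k0 ≠ 0 ∧ k0 ≠ 0 := by
    set z : Fin (n-1) := ⟨0, hNpos⟩ with hz
    obtain ⟨js, hjs⟩ := Function.ne_iff.mp hT0
    have hjs : T js ≠ 0 := hjs
    have hprod : (∏ i, v i (js i)) ≠ 0 := by rw [← hv js]; exact hjs
    have hvne : ∀ k, v k (js k) ≠ 0 := fun k =>
      Finset.prod_ne_zero_iff.mp hprod k (Finset.mem_univ k)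
    set g : Fin (n-1) → ℂ := fun l => v l (js l) with hg
    have hswap : ∀ (k : Fin (n-1)), k ≠ z → ∀ i, v k i * v z (js z) = v z i * v k (js z) := by
      intro k hk i
      have e1 : T (Function.update js k i) = ∏ l, Function.update g k (v k i) l := by
        rw [hv]
        apply Finset.prod_congr rfl
        intro l _
        rcases eq_or_ne l k with rfl | h
        · simp
        · rw [Function.update_of_ne h, Function.update_of_ne h]
      have hw : (Function.update js k i) ∘ (Equiv.swap z k) =
          Function.update (Function.update js z i) k (js z) := by
        funext l
        simp only [Function.comp_apply]
        rcases eq_or_ne l z with rfl | h0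
        · rw [Equiv.swap_apply_left, Function.update_self, Function.update_of_ne (Ne.symm hk),
            Function.update_self]
        · rcases eq_or_ne l k with rfl | hkl
          · rw [Equiv.swap_apply_right, Function.update_of_ne (Ne.symm hk), Function.update_self]
          · rw [Equiv.swap_apply_of_ne_of_ne h0 hkl, Function.update_of_ne hkl,
              Function.update_of_ne hkl, Function.update_of_ne h0]
      have e3 : T (Function.update js k i) =
          ∏ l, Function.update (Function.update g z (v z i)) k (v k (js z)) l := by
        rw [← hsym (Function.update js k i) (Equiv.swap z k), hw, hv]
        apply Finset.prod_congr rfl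
        intro l _
        rcases eq_or_ne l k with rfl | h
        · rw [Function.update_self, Function.update_self]
        · rw [Function.update_of_ne h, Function.update_of_ne h]
          rcases eq_or_ne l z with rfl | h0
          · rw [Function.update_self, Function.update_self]
          · rw [Function.update_of_ne h0, Function.update_of_ne h0]
      rw [e1] at e3
      rw [Finset.prod_update_of_mem (Finset.mem_univ k)] at e3
      rw [Finset.prod_update_of_mem (Finset.mem_univ k)] at e3
      have h0mem : z ∈ Finset.univ \ {k} := by
        rw [Finset.mem_sdiff]
        exact ⟨Finset.mem_univ z, by simpa using Ne.symm hk⟩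
      rw [Finset.prod_update_of_mem h0mem] at e3
      rw [← Finset.mul_prod_erase _ g h0mem, Finset.erase_eq] at e3
      have hP : (∏ l ∈ (Finset.univ \ {k}) \ {z}, g l) ≠ 0 :=
        Finset.prod_ne_zero_iff.mpr fun l _ => hvne l
      apply mul_right_cancel₀ hP
      have hgz : g z = v z (js z) := rfl
      calc v k i * v z (js z) * ∏ l ∈ (Finset.univ \ {k}) \ {z}, g l
          = v k i * (g z * ∏ l ∈ (Finset.univ \ {k}) \ {z}, g l) := by rw [hgz]; ring
        _ = v k (js z) * (v z i * ∏ l ∈ (Finset.univ \ {k}) \ {z}, g l) := e3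
        _ = v z i * v k (js z) * ∏ l ∈ (Finset.univ \ {k}) \ {z}, g l := by ring
    set c : Fin (n-1) → ℂ := fun k => if k = z then 1 else v k (js z) * (v z (js z))⁻¹
      with hcdef
    have hc : ∀ k i, v k i = c k * v z i := by
      intro k i
      rcases eq_or_ne k z with rfl | hk
      · simp [hcdef]
      · have h1 := hswap k hk i
        have h2 : v z (js z) ≠ 0 := hvne z
        rw [hcdef]
        simp only [if_neg hk]
        field_simp
        linear_combination h1
    obtain ⟨lam, hlam⟩ := IsAlgClosed.exists_pow_nat_eq
      ((∏ k, c k) * (((n-1).factorial : ℂ))⁻¹) hNpos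
    set u : Fin (b+1) → ℂ := fun i => lam * v z i with hudef
    have hfacne : (((n-1).factorial : ℕ) : ℂ) ≠ 0 := by
      exact_mod_cast Nat.cast_ne_zero.mpr (Nat.factorial_pos (n-1)).ne'
    have hTu : ∀ j, T j = (((n-1).factorial : ℕ) : ℂ) * ∏ k, u (j k) := by
      intro j
      rw [hv j]
      have h1 : ∀ k, v k (j k) = c k * v z (j k) := fun k => hc k (j k)
      rw [Finset.prod_congr rfl (fun k _ => h1 k), Finset.prod_mul_distrib]
      have h2 : ∏ k, u (j k) = lam ^ (n-1) * ∏ k, v z (j k) := by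
        rw [hudef]
        simp only
        rw [Finset.prod_mul_distrib, Finset.prod_const, Finset.card_univ, Fintype.card_fin]
      rw [h2, ← mul_assoc, hlam]
      field_simp
    have hu0 : u 0 = 0 := by
      have h1 := hTu (fun _ => (0 : Fin (b+1)))
      rw [hconst0] at h1
      have h2 : (∏ _k : Fin (n-1), u 0) = u 0 ^ (n-1) := by
        rw [Finset.prod_const, Finset.card_univ, Fintype.card_fin]
      rw [h2] at h1
      have h3 : u 0 ^ (n-1) = 0 := by
        rcases mul_eq_zero.mp h1.symm with h | h
        · exact absurd h hfacne
        · exact h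
      exact pow_eq_zero_iff hNpos.ne' |>.mp h3
    refine ⟨u, hTu, hu0, js z, ?_, ?_⟩
    · have h1 := hTu js
      rw [h1] at hjs
      have h2 : (∏ k, u (js k)) ≠ 0 := fun h => hjs (by rw [h, mul_zero])
      exact Finset.prod_ne_zero_iff.mp h2 z (Finset.mem_univ z)
    · intro h
      have h1 := hTu js
      rw [h1] at hjs
      have h2 : (∏ k, u (js k)) ≠ 0 := fun hh => hjs (by rw [hh, mul_zero])
      have h3 := Finset.prod_ne_zero_iff.mp h2 z (Finset.mem_univ z)
      rw [h, hu0] at h3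
      exact h3 rfl
  -- step 9 : H is a power of a linear form
  have hHe : H = (∑ i, C (u i) * X i) ^ (n - 1) := by
    have hlhom : ((∑ i, C (u i) * X i) ^ (n - 1)).IsHomogeneous (n - 1) := by
      have := (ell_homog u).pow (n - 1)
      rwa [one_mul] at this
    apply MvPolynomial.ext
    intro m
    by_cases hdeg : m.degree = n - 1
    · obtain ⟨idx, hcnt⟩ := exists_idx m hdeg
      have E1 := hT2 idx
      rw [hcnt] at E1
      have E3 := hTu idx
      have hL := lemL (List.ofFn idx) ((∑ i, C (u i) * X i) ^ (n - 1)) 0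
      rw [mfact_zero, Nat.cast_one, one_mul, zero_add, hcnt] at hL
      have hD := Dchain u (List.ofFn idx) (n - 1)
      rw [List.length_ofFn, Nat.descFactorial_self, Nat.sub_self, pow_zero, mul_one,
        prod_ofFn_map] at hD
      rw [hD] at hL
      have hcoeffC : coeff (0 : Fin (b+1) →₀ ℕ) (C (((n-1).factorial : ℂ) * ∏ k, u (idx k))) =
          ((n-1).factorial : ℂ) * ∏ k, u (idx k) := coeff_zero_C _
      rw [hcoeffC] at hL
      have key : ((m 0 + 1 : ℕ) : ℂ) * (mfact m : ℂ) * coeff m H =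
          (mfact m : ℂ) * coeff m ((∑ i, C (u i) * X i) ^ (n - 1)) := by
        rw [← E1, E3, ← hL]
      by_cases hm0 : m 0 = 0
      · rw [hm0] at key
        norm_num at key
        rcases key with h | h
        · exact h
        · exact absurd (by exact_mod_cast h) (mfact_ne_zero m)
      · rw [hcoeff0 m hm0, mul_zero] at key
        rw [hcoeff0 m hm0]
        rcases mul_eq_zero.mp key.symm with h | h
        · exact absurd h (mfact_ne_zero m)
        · exact h.symm
    · rw [hH.coeff_eq_zero hdeg, hlhom.coeff_eq_zero hdeg]
  -- step 10 : construct the matrix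
  clear hT2 hsym hconst0 hTu hv hT0 hrk hTdef
  set sw : Equiv.Perm (Fin (b+1)) := Equiv.swap 1 k0 with hswdef
  have hsw0 : sw 0 = 0 := Equiv.swap_apply_of_ne_of_ne (Ne.symm hone) (Ne.symm hk00)
  have hswne0 : ∀ j : Fin (b+1), j ≠ 0 → sw j ≠ 0 := by
    intro j hj h
    exact hj (sw.injective (h.trans hsw0.symm))
  have hswk0 : ∀ j : Fin (b+1), j ≠ 1 → sw j ≠ k0 := by
    intro j hj h
    apply hj
    apply sw.injective
    rw [h, hswdef]
    simp [Equiv.swap_apply_right]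
  set M : Matrix (Fin (b+1)) (Fin (b+1)) ℂ := fun i j =>
    if j = 0 then (if i = 0 then 1 else 0)
    else if j = 1 then (if i = k0 then (u k0)⁻¹ else 0)
    else (if i = sw j then 1 else 0) - (if i = k0 then u (sw j) * (u k0)⁻¹ else 0) with hM
  have hMdef : ∀ i j, M i j =
      if j = 0 then (if i = 0 then 1 else 0)
      else if j = 1 then (if i = k0 then (u k0)⁻¹ else 0)
      else (if i = sw j then 1 else 0) - (if i = k0 then u (sw j) * (u k0)⁻¹ else 0) :=
    fun i j => rfl
  have hrow0 : ∀ j, M 0 j = if j = 0 then 1 else 0 := by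
    intro j
    rw [hMdef]
    by_cases hj0 : j = 0
    · simp [hj0]
    · rw [if_neg hj0, if_neg hj0]
      by_cases hj1 : j = 1
      · rw [if_pos hj1, if_neg (Ne.symm hk00)]
      · rw [if_neg hj1, if_neg (Ne.symm hk00), if_neg (Ne.symm (hswne0 j hj0))]
        ring
  have hsum : ∀ jc, (∑ i, u i * M i jc) = if jc = 1 then 1 else 0 := by
    intro jc
    by_cases hj0 : jc = 0
    · subst hj0
      rw [if_neg (Ne.symm hone)]
      rw [Finset.sum_eq_single 0]
      · rw [hMdef]; simp [hu0]
      · intro i _ hi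
        rw [hMdef, if_pos rfl, if_neg hi, mul_zero]
      · intro h; exact absurd (Finset.mem_univ _) h
    · by_cases hj1 : jc = 1
      · subst hj1
        rw [if_pos rfl]
        rw [Finset.sum_eq_single k0]
        · rw [hMdef, if_neg hj0, if_pos rfl, if_pos rfl]
          exact mul_inv_cancel₀ hk0
        · intro i _ hi
          rw [hMdef, if_neg hj0, if_pos rfl, if_neg hi, mul_zero]
        · intro h; exact absurd (Finset.mem_univ _) h
      · rw [if_neg hj1]
        have hterm : ∀ i, u i * M i jc =
            (if i = sw jc then u i else 0)
              - (if i = k0 then u i * (u (sw jc) * (u k0)⁻¹) else 0) := by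
          intro i
          rw [hMdef, if_neg hj0, if_neg hj1, mul_sub]
          congr 1
          · split <;> simp
          · split <;> simp
        rw [Finset.sum_congr rfl (fun i _ => hterm i), Finset.sum_sub_distrib]
        rw [Finset.sum_ite_eq' Finset.univ (sw jc) u, if_pos (Finset.mem_univ _)]
        rw [Finset.sum_ite_eq' Finset.univ k0 (fun i => u i * (u (sw jc) * (u k0)⁻¹)),
          if_pos (Finset.mem_univ _)]
        field_simp
        ring
  set Nm : Matrix (Fin (b+1)) (Fin (b+1)) ℂ := fun a i =>
    if a = 0 then (if i = 0 then 1 else 0)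
    else if a = 1 then u i
    else (if i = sw a then 1 else 0) with hNm
  have hNM : Nm * M = 1 := by
    ext a c
    rw [Matrix.mul_apply, Matrix.one_apply]
    by_cases ha0 : a = 0
    · subst ha0
      have hN0 : ∀ i : Fin (b+1), Nm 0 i = if i = 0 then (1:ℂ) else 0 := by
        intro i
        show (if (0 : Fin (b+1)) = 0 then (if i = 0 then (1:ℂ) else 0)
          else if (0 : Fin (b+1)) = 1 then u i else if i = sw 0 then 1 else 0) = _
        rw [if_pos rfl]
      rw [Finset.sum_eq_single (0 : Fin (b+1))]
      · rw [hN0, if_pos rfl, one_mul, hrow0]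
        by_cases h : c = 0 <;> simp [h, eq_comm]
      · intro i _ hi
        rw [hN0, if_neg hi, zero_mul]
      · intro h; exact absurd (Finset.mem_univ _) h
    · by_cases ha1 : a = 1
      · subst ha1
        have hN1 : ∀ i : Fin (b+1), Nm 1 i = u i := by
          intro i
          show (if (1 : Fin (b+1)) = 0 then (if i = 0 then (1:ℂ) else 0)
            else if (1 : Fin (b+1)) = 1 then u i else if i = sw 1 then 1 else 0) = _
          rw [if_neg hone, if_pos rfl]
        have hsame : (∑ i, Nm 1 i * M i c) = ∑ i, u i * M i c :=
          Finset.sum_congr rfl (fun i _ => by rw [hN1])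
        rw [hsame, hsum c]
        by_cases h : c = 1 <;> simp [h, eq_comm]
      · have hNa : ∀ i, Nm a i = if i = sw a then (1:ℂ) else 0 := by
          intro i
          show (if a = 0 then (if i = 0 then (1:ℂ) else 0)
            else if a = 1 then u i else if i = sw a then 1 else 0) = _
          rw [if_neg ha0, if_neg ha1]
        rw [Finset.sum_eq_single (sw a)]
        · rw [hNa, if_pos rfl, one_mul]
          have hswa0 : sw a ≠ 0 := hswne0 a ha0
          have hswak : sw a ≠ k0 := hswk0 a ha1
          rw [hMdef]
          by_cases hc0 : c = 0
          · rw [if_pos hc0, if_neg hswa0, if_neg (by rw [hc0]; exact ha0)]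
          · rw [if_neg hc0]
            by_cases hc1 : c = 1
            · rw [if_pos hc1, if_neg hswak, if_neg (by rw [hc1]; exact ha1)]
            · rw [if_neg hc1, if_neg hswak, sub_zero]
              have hiff : (sw a = sw c) ↔ (a = c) :=
                ⟨fun h => sw.injective h, fun h => by rw [h]⟩
              by_cases h : a = c
              · rw [if_pos (hiff.mpr h), if_pos h]
              · rw [if_neg (fun hh => h (hiff.mp hh)), if_neg h]
        · intro i _ hi
          rw [hNa, if_neg hi, zero_mul]
        · intro h; exact absurd (Finset.mem_univ _) h
  refine ⟨M, Matrix.isUnit_det_of_left_inverse hNM, ?_, ?_, ?_⟩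
  · rw [hMdef]; simp
  · intro j
    constructor
    · rw [hrow0, if_neg (Fin.succ_ne_zero j)]
    · rw [hMdef, if_pos rfl, if_neg (Fin.succ_ne_zero j)]
  · have hphi0 : (∑ j, C (M 0 j) * X j) = (X 0 : MvPolynomial (Fin (b+1)) ℂ) := by
      rw [Finset.sum_eq_single (0 : Fin (b+1))]
      · rw [hrow0, if_pos rfl, map_one, one_mul]
      · intro j _ hj
        rw [hrow0, if_neg hj, map_zero, zero_mul]
      · intro h; exact absurd (Finset.mem_univ _) h
    have hell : aeval (fun i => ∑ j, C (M i j) * X j) (∑ i, C (u i) * X i)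
        = (X 1 : MvPolynomial (Fin (b+1)) ℂ) := by
      rw [map_sum]
      simp only [map_mul, aeval_C, aeval_X, MvPolynomial.algebraMap_eq]
      have step : ∀ i : Fin (b+1), C (u i) * (∑ j, C (M i j) * X j)
          = ∑ j, C (u i * M i j) * X j := by
        intro i
        rw [Finset.mul_sum]
        apply Finset.sum_congr rfl
        intro j _
        rw [← mul_assoc, ← C_mul]
      rw [Finset.sum_congr rfl (fun i _ => step i), Finset.sum_comm]
      have step2 : ∀ j : Fin (b+1), (∑ i, C (u i * M i j) * X j)
          = C (if j = 1 then (1:ℂ) else 0) * X j := by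
        intro j
        rw [← Finset.sum_mul, ← map_sum, hsum j]
      rw [Finset.sum_congr rfl (fun j _ => step2 j)]
      rw [Finset.sum_eq_single (1 : Fin (b+1))]
      · rw [if_pos rfl, map_one, one_mul]
      · intro j _ hj
        rw [if_neg hj, map_zero, zero_mul]
      · intro h; exact absurd (Finset.mem_univ _) h
    unfold pullback
    rw [hHe, map_mul, aeval_X, hphi0, map_pow, hell]
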